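/- The involution ρ(x₀,…,x₅) = (−x₀,−x₁,−x₂,x₃,x₄,x₅) of ℙ⁵ restricted to X = {Σᵢ xᵢ² = 0} ∩ {Σᵢ xᵢ⁴ = 0} has fixed locus consisting of exactly 16 points, namely the points of X lying in the plane {x₀ = x₁ = x₂ = 0} (8 points) together with those in {x₃ = x₄ = x₅ = 0} (8 points). -/

import Mathlib

open scoped LinearAlgebra.Projectivization

/-- The linear involution of `ℂ⁶` negating the first three coordinates. -/
noncomputable def negFirstThree : (Fin 6 → ℂ) ≃ₗ[ℂ] (Fin 6 → ℂ) :=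
  LinearEquiv.piCongrRight fun i : Fin 6 =>
    if (i : ℕ) < 3 then LinearEquiv.neg ℂ else LinearEquiv.refl ℂ ℂ

/-- The induced involution `ρ(x₀,…,x₅) = (-x₀,-x₁,-x₂,x₃,x₄,x₅)` of `ℙ⁵`. -/
noncomputable def rhoP5 : ℙ ℂ (Fin 6 → ℂ) → ℙ ℂ (Fin 6 → ℂ) :=
  Projectivization.map negFirstThree.toLinearMap negFirstThree.injective

/-- `X ⊂ ℙ⁵`: the intersection of the Fermat quadric and the Fermat quartic. -/
def fermatX : Set (ℙ ℂ (Fin 6 → ℂ)) :=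
  {P | (∑ i, P.rep i ^ 2 = 0) ∧ (∑ i, P.rep i ^ 4 = 0)}

/- ### Auxiliary lemmas -/

lemma negFirstThree_apply (v : Fin 6 → ℂ) :
    negFirstThree v = fun i : Fin 6 => if (i : ℕ) < 3 then -v i else v i := by
  funext i
  by_cases h : (i : ℕ) < 3 <;> simp [negFirstThree, h]

lemma fixed_iff_mk (v : Fin 6 → ℂ) (hv : v ≠ 0) :
    rhoP5 (Projectivization.mk ℂ v hv) = Projectivization.mk ℂ v hv ↔
      (v 0 = 0 ∧ v 1 = 0 ∧ v 2 = 0) ∨ (v 3 = 0 ∧ v 4 = 0 ∧ v 5 = 0) := by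
  rw [rhoP5, Projectivization.map_mk]
  rw [Projectivization.mk_eq_mk_iff]
  set r := v with hr
  constructor
  · rintro ⟨a, ha⟩
    have key : ∀ i : Fin 6, (a : ℂ) * r i = if (i : ℕ) < 3 then -r i else r i := by
      intro i
      have := congrFun ha i
      simp only [LinearEquiv.coe_coe, negFirstThree_apply] at this
      simpa [Units.smul_def] using this
    by_cases h3 : r 3 = 0 ∧ r 4 = 0 ∧ r 5 = 0
    · exact Or.inr h3
    · left
      obtain ⟨j, hj, hrj⟩ : ∃ j : Fin 6, ¬ ((j : ℕ) < 3) ∧ r j ≠ 0 := by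
        rcases not_and_or.mp h3 with h | h
        · exact ⟨3, by decide, h⟩
        · rcases not_and_or.mp h with h | h
          · exact ⟨4, by decide, h⟩
          · exact ⟨5, by decide, h⟩
      have ha1 : (a : ℂ) = 1 := by
        have hk := key j
        rw [if_neg hj] at hk
        have : ((a : ℂ) - 1) * r j = 0 := by linear_combination hk
        rcases mul_eq_zero.mp this with h | h
        · linear_combination h
        · exact absurd h hrj
      have hz : ∀ i : Fin 6, (i : ℕ) < 3 → r i = 0 := by
        intro i hi
        have hk := key i
        rw [if_pos hi, ha1, one_mul] at hk
        have h2 : (2 : ℂ) * r i = 0 := by linear_combination hk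
        rcases mul_eq_zero.mp h2 with h | h
        · norm_num at h
        · exact h
      exact ⟨hz 0 (by decide), hz 1 (by decide), hz 2 (by decide)⟩
  · rintro (⟨h0, h1, h2⟩ | ⟨h3, h4, h5⟩)
    · refine ⟨1, ?_⟩
      funext i
      simp only [LinearEquiv.coe_coe, negFirstThree_apply]
      fin_cases i <;> simp [h0, h1, h2]
    · refine ⟨-1, ?_⟩
      funext i
      simp only [LinearEquiv.coe_coe, negFirstThree_apply]
      fin_cases i <;> simp [h3, h4, h5]

lemma fixed_iff (P : ℙ ℂ (Fin 6 → ℂ)) :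
    rhoP5 P = P ↔ (P.rep 0 = 0 ∧ P.rep 1 = 0 ∧ P.rep 2 = 0) ∨
      (P.rep 3 = 0 ∧ P.rep 4 = 0 ∧ P.rep 5 = 0) := by
  conv_lhs => rw [← P.mk_rep]
  rw [fixed_iff_mk P.rep P.rep_nonzero]

lemma rep_smul' (v : Fin 6 → ℂ) (hv : v ≠ 0) :
    ∃ c : ℂ, c ≠ 0 ∧ (Projectivization.mk ℂ v hv).rep = c • v := by
  obtain ⟨a, ha⟩ := Projectivization.exists_smul_eq_mk_rep ℂ v hv
  exact ⟨a, a.ne_zero, ha.symm⟩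

lemma mem_fermatX_mk' (v : Fin 6 → ℂ) (hv : v ≠ 0) :
    Projectivization.mk ℂ v hv ∈ fermatX ↔
      (∑ i, v i ^ 2 = 0 ∧ ∑ i, v i ^ 4 = 0) := by
  obtain ⟨c, hc, hrep⟩ := rep_smul' v hv
  simp only [fermatX, Set.mem_setOf_eq, hrep, Pi.smul_apply, smul_eq_mul, mul_pow,
    ← Finset.mul_sum]
  constructor
  · rintro ⟨h1, h2⟩
    exact ⟨(mul_eq_zero.mp h1).resolve_left (pow_ne_zero _ hc),
      (mul_eq_zero.mp h2).resolve_left (pow_ne_zero _ hc)⟩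
  · rintro ⟨h1, h2⟩
    exact ⟨by rw [h1, mul_zero], by rw [h2, mul_zero]⟩

lemma rep_mk_zero_iff' (v : Fin 6 → ℂ) (hv : v ≠ 0) (i : Fin 6) :
    (Projectivization.mk ℂ v hv).rep i = 0 ↔ v i = 0 := by
  obtain ⟨c, hc, hrep⟩ := rep_smul' v hv
  simp [hrep, hc]

/- ### The sixteen points -/

lemma vA_ne (y z : ℂ) : (![0, 0, 0, y, z, 1] : Fin 6 → ℂ) ≠ 0 := by
  intro h
  have : (1 : ℂ) = 0 := congrFun h 5
  simp at this

lemma vB_ne (y z : ℂ) : (![y, z, 1, 0, 0, 0] : Fin 6 → ℂ) ≠ 0 := by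
  intro h
  have : (1 : ℂ) = 0 := congrFun h 2
  simp at this

noncomputable def ptA (p : ℂ × ℂ) : ℙ ℂ (Fin 6 → ℂ) :=
  Projectivization.mk ℂ ![0, 0, 0, p.1, p.2, 1] (vA_ne p.1 p.2)

noncomputable def ptB (p : ℂ × ℂ) : ℙ ℂ (Fin 6 → ℂ) :=
  Projectivization.mk ℂ ![p.1, p.2, 1, 0, 0, 0] (vB_ne p.1 p.2)

lemma ptA_injective : Function.Injective ptA := by
  rintro ⟨y, z⟩ ⟨y', z'⟩ h
  rw [ptA, ptA, Projectivization.mk_eq_mk_iff'] at h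
  obtain ⟨a, ha⟩ := h
  have h5 : a * 1 = 1 := congrFun ha 5
  have h3 : a * y' = y := congrFun ha 3
  have h4 : a * z' = z := congrFun ha 4
  rw [mul_one] at h5
  subst h5
  rw [one_mul] at h3 h4
  simp [h3, h4]

lemma ptB_injective : Function.Injective ptB := by
  rintro ⟨y, z⟩ ⟨y', z'⟩ h
  rw [ptB, ptB, Projectivization.mk_eq_mk_iff'] at h
  obtain ⟨a, ha⟩ := h
  have h5 : a * 1 = 1 := congrFun ha 2
  have h3 : a * y' = y := congrFun ha 0
  have h4 : a * z' = z := congrFun ha 1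
  rw [mul_one] at h5
  subst h5
  rw [one_mul] at h3 h4
  simp [h3, h4]

def Tset (η : ℂ) : Set (ℂ × ℂ) :=
  {p | ((p.1 = η ∨ p.1 = -η) ∧ (p.2 = η ^ 2 ∨ p.2 = -η ^ 2)) ∨
    ((p.1 = η ^ 2 ∨ p.1 = -η ^ 2) ∧ (p.2 = η ∨ p.2 = -η))}

noncomputable def Fset (η : ℂ) : Finset (ℂ × ℂ) :=
  ({η, -η} ×ˢ {η ^ 2, -η ^ 2}) ∪ ({η ^ 2, -η ^ 2} ×ˢ {η, -η})

lemma Tset_eq_Fset (η : ℂ) : Tset η = ↑(Fset η) := by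
  ext ⟨y, z⟩
  simp [Tset, Fset]

section eta
variable {η : ℂ} (hη : η ^ 2 = η - 1)

include hη

lemma eta_ne_zero' : η ≠ 0 := by
  intro h; rw [h] at hη; norm_num at hη

lemma n1 : η ≠ -η := by
  intro h
  apply eta_ne_zero' hη
  have h2 : (2 : ℂ) * η = 0 := by linear_combination h
  simpa using h2

lemma n2 : η ^ 2 ≠ -η ^ 2 := by
  intro h
  apply pow_ne_zero 2 (eta_ne_zero' hη)
  have h2 : (2 : ℂ) * η ^ 2 = 0 := by linear_combination h
  simpa using h2

lemma n3 : η ≠ η ^ 2 := by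
  intro h
  have : (0 : ℂ) = -1 := by linear_combination h + hη
  norm_num at this

lemma n4 : η ≠ -η ^ 2 := by
  intro h
  have : (3 : ℂ) = 0 := by linear_combination (2 * η + 3) * hη - (2 * η - 1) * h
  norm_num at this

lemma n5 : -η ≠ η ^ 2 := fun h => n4 hη (by linear_combination -h)

lemma n6 : -η ≠ -η ^ 2 := fun h => n3 hη (neg_inj.mp h)

lemma Fset_card : (Fset η).card = 8 := by
  have hA : ({η, -η} : Finset ℂ).card = 2 := Finset.card_pair (n1 hη)
  have hB : ({η ^ 2, -η ^ 2} : Finset ℂ).card = 2 := Finset.card_pair (n2 hη)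
  have hdisj : Disjoint (({η, -η} : Finset ℂ) ×ˢ {η ^ 2, -η ^ 2})
      ({η ^ 2, -η ^ 2} ×ˢ {η, -η}) := by
    rw [Finset.disjoint_left]
    rintro ⟨y, z⟩ hy hz
    simp only [Finset.mem_product, Finset.mem_insert, Finset.mem_singleton] at hy hz
    rcases hy.1 with h | h <;> rcases hz.1 with h' | h' <;> rw [h] at h'
    · exact n3 hη h'
    · exact n4 hη h'
    · exact n5 hη h'
    · exact n6 hη h'
  rw [Fset, Finset.card_union_of_disjoint hdisj, Finset.card_product, Finset.card_product,
    hA, hB]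

lemma memT_eqns' {y z : ℂ} (h : (y, z) ∈ Tset η) :
    y ^ 2 + z ^ 2 + 1 = 0 ∧ y ^ 4 + z ^ 4 + 1 = 0 := by
  have hs : η ^ 2 + (η ^ 2) ^ 2 + 1 = 0 := by linear_combination (η ^ 2 + η + 1) * hη
  have hq : η ^ 4 + (η ^ 2) ^ 4 + 1 = 0 := by
    linear_combination (η ^ 2 + η + 1) * (η ^ 4 - η ^ 2 + 1) * hη
  rcases h with ⟨hy | hy, hz | hz⟩ | ⟨hy | hy, hz | hz⟩ <;> dsimp only at hy hz <;>
    subst hy <;> subst hz <;>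
    exact ⟨by linear_combination hs, by linear_combination hq⟩

lemma solveT' {y z : ℂ} (h2 : y ^ 2 + z ^ 2 + 1 = 0) (h4 : y ^ 4 + z ^ 4 + 1 = 0) :
    (y, z) ∈ Tset η := by
  have hprod : y ^ 2 * z ^ 2 = 1 := by
    linear_combination ((y ^ 2 + z ^ 2 - 1) / 2) * h2 - (1 / 2) * h4
  have hquad : (y ^ 2 - η ^ 2) * (y ^ 2 + η) = 0 := by
    linear_combination y ^ 2 * h2 - hprod - (y ^ 2 + η + 1) * hη
  have fact : ∀ a b : ℂ, (a - b) * (a + b) = 0 → a = b ∨ a = -b := by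
    intro a b h
    rcases mul_eq_zero.mp h with h | h
    · exact Or.inl (sub_eq_zero.mp h)
    · exact Or.inr (eq_neg_of_add_eq_zero_left h)
  rcases mul_eq_zero.mp hquad with hA | hB
  · have hA' : y ^ 2 = η ^ 2 := sub_eq_zero.mp hA
    left
    refine ⟨fact y η (by linear_combination hA), fact z (η ^ 2) ?_⟩
    have he : (z - η ^ 2) * (z + η ^ 2) = z ^ 2 - (η ^ 2) ^ 2 := by ring
    rw [he]
    linear_combination h2 - hA' - (η ^ 2 + η + 1) * hη
  · have hB' : y ^ 2 = -η := eq_neg_of_add_eq_zero_left hB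
    right
    constructor
    · refine fact y (η ^ 2) ?_
      have he : (y - η ^ 2) * (y + η ^ 2) = y ^ 2 - (η ^ 2) ^ 2 := by ring
      rw [he]
      linear_combination hB' - η * (η + 1) * hη
    · refine fact z η ?_
      have he : (z - η) * (z + η) = z ^ 2 - η ^ 2 := by ring
      rw [he]
      linear_combination h2 - hB' - hη

lemma SA_eq :
    {P : ℙ ℂ (Fin 6 → ℂ) | P ∈ fermatX ∧ P.rep 0 = 0 ∧ P.rep 1 = 0 ∧ P.rep 2 = 0} =
      ptA '' Tset η := by
  ext P
  simp only [Set.mem_setOf_eq, Set.mem_image]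
  constructor
  · rintro ⟨⟨hf2, hf4⟩, h0, h1, h2⟩
    rw [Fin.sum_univ_six] at hf2 hf4
    rw [h0, h1, h2] at hf2 hf4
    have h5 : P.rep 5 ≠ 0 := by
      intro h5
      rw [h5] at hf2 hf4
      have e2 : P.rep 3 ^ 2 + P.rep 4 ^ 2 = 0 := by linear_combination hf2
      have e4 : P.rep 3 ^ 4 + P.rep 4 ^ 4 = 0 := by linear_combination hf4
      have e0 : P.rep 3 ^ 2 * P.rep 4 ^ 2 = 0 := by
        linear_combination ((P.rep 3 ^ 2 + P.rep 4 ^ 2) / 2) * e2 - (1 / 2) * e4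
      have h34 : P.rep 3 = 0 ∧ P.rep 4 = 0 := by
        rcases mul_eq_zero.mp e0 with h | h
        · have h3 : P.rep 3 = 0 := pow_eq_zero_iff (n := 2) (by norm_num) |>.mp h
          refine ⟨h3, ?_⟩
          rw [h3] at e2
          have : P.rep 4 ^ 2 = 0 := by linear_combination e2
          exact pow_eq_zero_iff (n := 2) (by norm_num) |>.mp this
        · have h4 : P.rep 4 = 0 := pow_eq_zero_iff (n := 2) (by norm_num) |>.mp h
          refine ⟨?_, h4⟩
          rw [h4] at e2
          have : P.rep 3 ^ 2 = 0 := by linear_combination e2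
          exact pow_eq_zero_iff (n := 2) (by norm_num) |>.mp this
      apply P.rep_nonzero
      funext i
      fin_cases i
      · exact h0
      · exact h1
      · exact h2
      · exact h34.1
      · exact h34.2
      · exact h5
    refine ⟨(P.rep 3 / P.rep 5, P.rep 4 / P.rep 5), ?_, ?_⟩
    · apply solveT' hη
      · field_simp
        linear_combination hf2
      · field_simp
        linear_combination hf4
    · refine Eq.trans ?_ P.mk_rep
      rw [ptA, Projectivization.mk_eq_mk_iff']
      refine ⟨1 / P.rep 5, ?_⟩
      funext i
      fin_cases i
      · show 1 / P.rep 5 * P.rep 0 = 0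
        rw [h0, mul_zero]
      · show 1 / P.rep 5 * P.rep 1 = 0
        rw [h1, mul_zero]
      · show 1 / P.rep 5 * P.rep 2 = 0
        rw [h2, mul_zero]
      · show 1 / P.rep 5 * P.rep 3 = P.rep 3 / P.rep 5
        field_simp
      · show 1 / P.rep 5 * P.rep 4 = P.rep 4 / P.rep 5
        field_simp
      · show 1 / P.rep 5 * P.rep 5 = 1
        field_simp
  · rintro ⟨⟨y, z⟩, hT, rfl⟩
    obtain ⟨e2, e4⟩ := memT_eqns' hη hT
    refine ⟨(mem_fermatX_mk' _ _).2 ⟨?_, ?_⟩, ?_, ?_, ?_⟩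
    · rw [Fin.sum_univ_six]
      show (0 : ℂ) ^ 2 + 0 ^ 2 + 0 ^ 2 + y ^ 2 + z ^ 2 + 1 ^ 2 = 0
      linear_combination e2
    · rw [Fin.sum_univ_six]
      show (0 : ℂ) ^ 4 + 0 ^ 4 + 0 ^ 4 + y ^ 4 + z ^ 4 + 1 ^ 4 = 0
      linear_combination e4
    · exact (rep_mk_zero_iff' _ _ 0).2 rfl
    · exact (rep_mk_zero_iff' _ _ 1).2 rfl
    · exact (rep_mk_zero_iff' _ _ 2).2 rfl

lemma SB_eq :
    {P : ℙ ℂ (Fin 6 → ℂ) | P ∈ fermatX ∧ P.rep 3 = 0 ∧ P.rep 4 = 0 ∧ P.rep 5 = 0} =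
      ptB '' Tset η := by
  ext P
  simp only [Set.mem_setOf_eq, Set.mem_image]
  constructor
  · rintro ⟨⟨hf2, hf4⟩, h3, h4, h5⟩
    rw [Fin.sum_univ_six] at hf2 hf4
    rw [h3, h4, h5] at hf2 hf4
    have h2 : P.rep 2 ≠ 0 := by
      intro h2
      rw [h2] at hf2 hf4
      have e2 : P.rep 0 ^ 2 + P.rep 1 ^ 2 = 0 := by linear_combination hf2
      have e4 : P.rep 0 ^ 4 + P.rep 1 ^ 4 = 0 := by linear_combination hf4
      have e0 : P.rep 0 ^ 2 * P.rep 1 ^ 2 = 0 := by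
        linear_combination ((P.rep 0 ^ 2 + P.rep 1 ^ 2) / 2) * e2 - (1 / 2) * e4
      have h01 : P.rep 0 = 0 ∧ P.rep 1 = 0 := by
        rcases mul_eq_zero.mp e0 with h | h
        · have h0 : P.rep 0 = 0 := pow_eq_zero_iff (n := 2) (by norm_num) |>.mp h
          refine ⟨h0, ?_⟩
          rw [h0] at e2
          have : P.rep 1 ^ 2 = 0 := by linear_combination e2
          exact pow_eq_zero_iff (n := 2) (by norm_num) |>.mp this
        · have h1 : P.rep 1 = 0 := pow_eq_zero_iff (n := 2) (by norm_num) |>.mp h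
          refine ⟨?_, h1⟩
          rw [h1] at e2
          have : P.rep 0 ^ 2 = 0 := by linear_combination e2
          exact pow_eq_zero_iff (n := 2) (by norm_num) |>.mp this
      apply P.rep_nonzero
      funext i
      fin_cases i
      · exact h01.1
      · exact h01.2
      · exact h2
      · exact h3
      · exact h4
      · exact h5
    refine ⟨(P.rep 0 / P.rep 2, P.rep 1 / P.rep 2), ?_, ?_⟩
    · apply solveT' hη
      · field_simp
        linear_combination hf2
      · field_simp
        linear_combination hf4
    · refine Eq.trans ?_ P.mk_rep
      rw [ptB, Projectivization.mk_eq_mk_iff']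
      refine ⟨1 / P.rep 2, ?_⟩
      funext i
      fin_cases i
      · show 1 / P.rep 2 * P.rep 0 = P.rep 0 / P.rep 2
        field_simp
      · show 1 / P.rep 2 * P.rep 1 = P.rep 1 / P.rep 2
        field_simp
      · show 1 / P.rep 2 * P.rep 2 = 1
        field_simp
      · show 1 / P.rep 2 * P.rep 3 = 0
        rw [h3, mul_zero]
      · show 1 / P.rep 2 * P.rep 4 = 0
        rw [h4, mul_zero]
      · show 1 / P.rep 2 * P.rep 5 = 0
        rw [h5, mul_zero]
  · rintro ⟨⟨y, z⟩, hT, rfl⟩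
    obtain ⟨e2, e4⟩ := memT_eqns' hη hT
    refine ⟨(mem_fermatX_mk' _ _).2 ⟨?_, ?_⟩, ?_, ?_, ?_⟩
    · rw [Fin.sum_univ_six]
      show y ^ 2 + z ^ 2 + 1 ^ 2 + (0 : ℂ) ^ 2 + 0 ^ 2 + 0 ^ 2 = 0
      linear_combination e2
    · rw [Fin.sum_univ_six]
      show y ^ 4 + z ^ 4 + 1 ^ 4 + (0 : ℂ) ^ 4 + 0 ^ 4 + 0 ^ 4 = 0
      linear_combination e4
    · exact (rep_mk_zero_iff' _ _ 3).2 rfl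
    · exact (rep_mk_zero_iff' _ _ 4).2 rfl
    · exact (rep_mk_zero_iff' _ _ 5).2 rfl

end eta

lemma eta_exists : ∃ η : ℂ, η ^ 2 = η - 1 := by
  refine ⟨(1 + Complex.I * (Real.sqrt 3 : ℝ)) / 2, ?_⟩
  have h3 : ((Real.sqrt 3 : ℝ) : ℂ) ^ 2 = 3 := by
    rw [← Complex.ofReal_pow, Real.sq_sqrt (by norm_num : (3:ℝ) ≥ 0)]
    norm_num
  linear_combination (((Real.sqrt 3 : ℝ) : ℂ) ^ 2 / 4) * Complex.I_sq - (1 / 4) * h3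

/-- The fixed locus of `ρ` on `X` consists of exactly 16 points, namely the
points of `X` lying in `{x₀ = x₁ = x₂ = 0}` (8 points) together with those in
`{x₃ = x₄ = x₅ = 0}` (8 points). -/
theorem stmt_10 :
    ({P | P ∈ fermatX ∧ rhoP5 P = P} =
      {P ∈ fermatX | P.rep 0 = 0 ∧ P.rep 1 = 0 ∧ P.rep 2 = 0} ∪
      {P ∈ fermatX | P.rep 3 = 0 ∧ P.rep 4 = 0 ∧ P.rep 5 = 0}) ∧
    Nat.card {P // P ∈ fermatX ∧ P.rep 0 = 0 ∧ P.rep 1 = 0 ∧ P.rep 2 = 0} = 8 ∧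
    Nat.card {P // P ∈ fermatX ∧ P.rep 3 = 0 ∧ P.rep 4 = 0 ∧ P.rep 5 = 0} = 8 ∧
    Nat.card {P // P ∈ fermatX ∧ rhoP5 P = P} = 16 := by
  obtain ⟨η, hη⟩ := eta_exists
  have hSA := SA_eq hη
  have hSB := SB_eq hη
  have hT := Tset_eq_Fset η
  have finA : (ptA '' Tset η).Finite := by
    rw [hT]; exact (Fset η).finite_toSet.image _
  have finB : (ptB '' Tset η).Finite := by
    rw [hT]; exact (Fset η).finite_toSet.image _
  have ncA : (ptA '' Tset η).ncard = 8 := by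
    rw [hT, Set.ncard_image_of_injective _ ptA_injective, Set.ncard_coe_finset, Fset_card hη]
  have ncB : (ptB '' Tset η).ncard = 8 := by
    rw [hT, Set.ncard_image_of_injective _ ptB_injective, Set.ncard_coe_finset, Fset_card hη]
  have hdisj : Disjoint (ptA '' Tset η) (ptB '' Tset η) := by
    rw [← hSA, ← hSB, Set.disjoint_left]
    rintro P ⟨_, h0, h1, h2⟩ ⟨_, h3, h4, h5⟩
    apply P.rep_nonzero
    funext i
    fin_cases i
    · exact h0
    · exact h1
    · exact h2
    · exact h3
    · exact h4
    · exact h5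
  have hunion : {P : ℙ ℂ (Fin 6 → ℂ) | P ∈ fermatX ∧ rhoP5 P = P} =
      (ptA '' Tset η) ∪ (ptB '' Tset η) := by
    ext P
    have hfi := fixed_iff P
    have eA := Set.ext_iff.mp hSA P
    have eB := Set.ext_iff.mp hSB P
    simp only [Set.mem_setOf_eq] at eA eB
    simp only [Set.mem_setOf_eq, Set.mem_union]
    constructor
    · rintro ⟨hX, hfix⟩
      rcases hfi.mp hfix with h | h
      · exact Or.inl (eA.mp ⟨hX, h⟩)
      · exact Or.inr (eB.mp ⟨hX, h⟩)
    · rintro (h | h)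
      · obtain ⟨hX, h⟩ := eA.mpr h
        exact ⟨hX, hfi.mpr (Or.inl h)⟩
      · obtain ⟨hX, h⟩ := eB.mpr h
        exact ⟨hX, hfi.mpr (Or.inr h)⟩
  refine ⟨?_, ?_, ?_, ?_⟩
  · ext P
    have hfi := fixed_iff P
    simp only [Set.mem_setOf_eq, Set.mem_union, Set.mem_sep_iff]
    tauto
  · have h := Nat.card_coe_set_eq
      {P : ℙ ℂ (Fin 6 → ℂ) | P ∈ fermatX ∧ P.rep 0 = 0 ∧ P.rep 1 = 0 ∧ P.rep 2 = 0}
    exact h.trans (by rw [hSA]; exact ncA)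
  · have h := Nat.card_coe_set_eq
      {P : ℙ ℂ (Fin 6 → ℂ) | P ∈ fermatX ∧ P.rep 3 = 0 ∧ P.rep 4 = 0 ∧ P.rep 5 = 0}
    exact h.trans (by rw [hSB]; exact ncB)
  · have h := Nat.card_coe_set_eq
      {P : ℙ ℂ (Fin 6 → ℂ) | P ∈ fermatX ∧ rhoP5 P = P}
    refine h.trans ?_
    rw [hunion, Set.ncard_union_eq hdisj finA finB, ncA, ncB]
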